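/- arXiv:2601.02108 — 8 statements merged into one kernel-verified Lean document; each statement's English description precedes it below -/
import Mathlib

section
/- Orthogonality preservation: Let H be an n×n real symmetric matrix, (Uₙ)ₙ, (Ûₙ₊₁)ₙ, (Ũₙ)ₙ n×N real matrices and (sₙ)ₙ real step sizes such that for every n: Ûₙ₊₁ = Uₙ − sₙ·𝒜_{Ũₙ}·Ũₙ, Ũₙ = (Uₙ + Ûₙ₊₁)/2, and Uₙ₊₁ = Ûₙ₊₁ − sₙ·H·Ûₙ₊₁·(I_N − Ûₙ₊₁ᵀ·Ûₙ₊₁). If Uₖᵀ·Uₖ = I_N for some index k, then Uₙᵀ·Uₙ = I_N for all n ≥ k; in particular, orthonormal initial data U₀ (U₀ᵀ·U₀ = I_N) yields Uₙᵀ·Uₙ = I_N for every n. -/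
open Matrix

noncomputable section

/-- The skew-symmetric commutator 𝒜_W = H·W·Wᵀ − W·Wᵀ·H. -/
def commA {n N : ℕ} (H : Matrix (Fin n) (Fin n) ℝ) (W : Matrix (Fin n) (Fin N) ℝ) :
    Matrix (Fin n) (Fin n) ℝ :=
  H * W * Wᵀ - W * Wᵀ * H

lemma commA_skew {n N : ℕ} (H : Matrix (Fin n) (Fin n) ℝ) (hH : H.IsSymm)
    (W : Matrix (Fin n) (Fin N) ℝ) : (commA H W)ᵀ = -(commA H W) := by
  unfold commA
  rw [transpose_sub, transpose_mul, transpose_mul, transpose_mul, transpose_mul,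
    transpose_transpose, hH.eq]
  rw [Matrix.mul_assoc, Matrix.mul_assoc]
  abel

/-- One predictor step preserves orthonormality. -/
lemma step_preserves {n N : ℕ} (H : Matrix (Fin n) (Fin n) ℝ) (hH : H.IsSymm)
    (Uk Uh Utk : Matrix (Fin n) (Fin N) ℝ) (sk : ℝ)
    (hpred : Uh = Uk - sk • (commA H Utk * Utk))
    (hmid : Utk = (1 / 2 : ℝ) • (Uk + Uh)) :
    Uhᵀ * Uh = Ukᵀ * Uk := by
  set A := commA H Utk with hA
  set B := A * Utk with hB
  have hAskew : Aᵀ = -A := commA_skew H hH Utk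
  -- From the midpoint relation: Uk = Utk + (sk/2)•B and Uh = Utk - (sk/2)•B
  have hUk : Uk = Utk + (sk / 2) • B := by
    rw [hmid, hpred]
    module
  have hUh : Uh = Utk - (sk / 2) • B := by
    rw [hpred, hUk]; module
  -- Cross terms cancel by skew-symmetry
  have hcancel : Bᵀ * Utk = -(Utkᵀ * B) := by
    rw [hB, transpose_mul, hAskew]
    simp [Matrix.mul_assoc, Matrix.neg_mul, Matrix.mul_neg]
  rw [hUk, hUh]
  simp only [transpose_sub, transpose_add, transpose_smul,
    Matrix.sub_mul, Matrix.add_mul, Matrix.mul_sub, Matrix.mul_add,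
    Matrix.smul_mul, Matrix.mul_smul, hcancel]
  module

/-- Orthogonality preservation: once some iterate is orthonormal, all subsequent
iterates are orthonormal. -/
theorem orthogonality_preservation
    {n N : ℕ} (H : Matrix (Fin n) (Fin n) ℝ) (hH : H.IsSymm)
    (U Uhat Ut : ℕ → Matrix (Fin n) (Fin N) ℝ) (s : ℕ → ℝ)
    (hpred : ∀ k, Uhat k = U k - s k • (commA H (Ut k) * Ut k))
    (hmid : ∀ k, Ut k = (1 / 2 : ℝ) • (U k + Uhat k))
    (hcorr : ∀ k, U (k + 1) = Uhat k - s k • (H * Uhat k * (1 - (Uhat k)ᵀ * Uhat k)))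
    (k : ℕ) (hk : (U k)ᵀ * U k = 1) :
    ∀ m ≥ k, (U m)ᵀ * U m = 1 := by
  intro m hm
  induction m, hm using Nat.le_induction with
  | base => exact hk
  | succ m hm ih =>
    have hhat : (Uhat m)ᵀ * Uhat m = 1 := by
      rw [step_preserves H hH (U m) (Uhat m) (Ut m) (s m) (hpred m) (hmid m), ih]
    have : U (m + 1) = Uhat m := by
      rw [hcorr m, hhat]
      simp
    rw [this, hhat]
end
end

section
/- Norm preservation of the predictor step (Lemma 3.2, first part): Let H be an n×n real symmetric matrix, U, Ũ, Û n×N real matrices and s ∈ ℝ. If Û = U − s·𝒜_Ũ·Ũ and Ũ = (U + Û)/2, then Ûᵀ·Û = Uᵀ·U. -/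
open Matrix

noncomputable section

/-- Norm preservation of the predictor step (Lemma 3.2, first part). -/
theorem predictor_norm_preservation
    {n N : ℕ} (H : Matrix (Fin n) (Fin n) ℝ) (hH : H.IsSymm)
    (U Ut Uhat : Matrix (Fin n) (Fin N) ℝ) (s : ℝ)
    (hpred : Uhat = U - s • (commA H Ut * Ut))
    (hmid : Ut = (1 / 2 : ℝ) • (U + Uhat)) :
    Uhatᵀ * Uhat = Uᵀ * U := by
  set A := commA H Ut with hAdef
  have hA : Aᵀ = -A := by
    simp only [hAdef, commA, transpose_sub, transpose_mul, transpose_transpose, hH.eq, Matrix.mul_assoc]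
    abel
  have hD : Uhat - U = (-s) • (A * Ut) := by
    rw [hpred, neg_smul]; abel
  have hS : Uhat + U = (2 : ℝ) • Ut := by
    rw [hmid, smul_smul]; norm_num; abel
  have key : Uhatᵀ * Uhat - Uᵀ * U
      = (1 / 2 : ℝ) • ((Uhat + U)ᵀ * (Uhat - U) + (Uhat - U)ᵀ * (Uhat + U)) := by
    simp only [transpose_add, transpose_sub, Matrix.add_mul, Matrix.sub_mul,
      Matrix.mul_add, Matrix.mul_sub, smul_add, smul_sub]
    module
  have hz : Uhatᵀ * Uhat - Uᵀ * U = 0 := by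
    rw [key, hD, hS]
    simp only [transpose_smul, transpose_mul, hA, Matrix.smul_mul, Matrix.mul_smul,
      Matrix.mul_neg, Matrix.neg_mul, smul_neg, Matrix.mul_assoc]
    module
  exact sub_eq_zero.mp hz
end
end

section
/- Invariance of eigenvector orthogonality under one scheme step (Lemma 3.3): Let H be an n×n real symmetric matrix with λ₁·Iₙ ≤ H ≤ λₘₐₓ·Iₙ in the Loewner order, for reals λ₁ ≤ λₘₐₓ. Let v ∈ ℝⁿ be nonzero with H·v = μ·v for some μ ∈ ℝ. Let U, Ũ, Û, U' be n×N real matrices and s > 0 satisfy Û = U − s·𝒜_Ũ·Ũ, Ũ = (U + Û)/2, and U' = Û − s·H·Û·(I_N − Ûᵀ·Û). Assume Uᵀ·U ≤ I_N and s·(λₘₐₓ − λ₁) < 2. If Uᵀ·v = 0 (v is orthogonal to every column of U), then Ûᵀ·v = 0 and U'ᵀ·v = 0. -/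
open Matrix

set_option maxHeartbeats 1000000

noncomputable section

/-- Loewner order: X ≤ Y iff Y − X is positive semidefinite. -/
def loewnerLE {k : ℕ} (X Y : Matrix (Fin k) (Fin k) ℝ) : Prop :=
  (Y - X).PosSemidef

/-- Invariance of eigenvector orthogonality under one scheme step (Lemma 3.3). -/
theorem eigenvector_orthogonality_invariance
    {n N : ℕ} (H : Matrix (Fin n) (Fin n) ℝ) (hH : H.IsSymm)
    (lam1 lamMax : ℝ) (hll : lam1 ≤ lamMax)
    (hHlow : loewnerLE (lam1 • (1 : Matrix (Fin n) (Fin n) ℝ)) H)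
    (hHup : loewnerLE H (lamMax • (1 : Matrix (Fin n) (Fin n) ℝ)))
    (v : Fin n → ℝ) (hv : v ≠ 0) (μ : ℝ) (hev : H.mulVec v = μ • v)
    (U Ut Uhat U' : Matrix (Fin n) (Fin N) ℝ) (s : ℝ) (hs : 0 < s)
    (hpred : Uhat = U - s • (commA H Ut * Ut))
    (hmid : Ut = (1 / 2 : ℝ) • (U + Uhat))
    (hcorr : U' = Uhat - s • (H * Uhat * (1 - Uhatᵀ * Uhat)))
    (hUle : loewnerLE (Uᵀ * U) 1)
    (hstep : s * (lamMax - lam1) < 2)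
    (horth : Uᵀ.mulVec v = 0) :
    Uhatᵀ.mulVec v = 0 ∧ U'ᵀ.mulVec v = 0 := by
  have dsn : ∀ {m : ℕ} (y : Fin m → ℝ), 0 ≤ y ⬝ᵥ y :=
    fun y => Finset.sum_nonneg fun i _ => mul_self_nonneg _
  have hHt : Hᵀ = H := hH
  set A := commA H Ut with hA
  set B := A * Ut with hB
  -- skew-symmetry of A
  have hAt : Aᵀ = -A := by
    simp only [hA, commA, transpose_sub, transpose_mul, transpose_transpose, hHt]
    rw [neg_sub]
    rw [Matrix.mul_assoc, Matrix.mul_assoc]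
  -- solve implicit relations
  have hUteq : Ut = U - (s / 2) • B := by
    have h := hmid
    rw [hpred] at h
    exact h.trans (by module)
  have hUeq : U = Ut + (s / 2) • B := by
    rw [eq_sub_iff_add_eq] at hUteq
    exact hUteq.symm
  have hUhateq : Uhat = Ut - (s / 2) • B := by
    rw [hpred, hUeq]; module
  -- skew cancellation
  have hBt : Bᵀ = -(Utᵀ * A) := by
    rw [hB, transpose_mul, hAt, Matrix.mul_neg]
  have hsk : Utᵀ * B = -(Bᵀ * Ut) := by
    rw [hBt, hB, Matrix.neg_mul, neg_neg, Matrix.mul_assoc]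
  -- Gram identity for Ut ± c • B
  have hGram : ∀ c : ℝ, (Ut + c • B)ᵀ * (Ut + c • B)
      = Utᵀ * Ut + (c * c) • (Bᵀ * B) := by
    intro c
    simp only [transpose_add, transpose_smul, Matrix.add_mul, Matrix.mul_add,
      Matrix.smul_mul, Matrix.mul_smul, hsk, smul_neg, smul_smul]
    module
  have hGramU : Uᵀ * U = Utᵀ * Ut + (s / 2 * (s / 2)) • (Bᵀ * B) := by
    rw [hUeq]; exact hGram (s / 2)
  have hGramUt : Utᵀ * Ut = Uᵀ * U - (s / 2 * (s / 2)) • (Bᵀ * B) := by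
    rw [hGramU]; module
  -- half relation for Utᵀ v
  set x := Uhatᵀ.mulVec v with hx
  have hw : Utᵀ.mulVec v = (1 / 2 : ℝ) • x := by
    rw [hmid]
    simp [transpose_add, transpose_smul, Matrix.add_mulVec, Matrix.smul_mulVec,
      horth, hx]
  set w : Fin N → ℝ := Utᵀ.mulVec v with hwdef
  set z : Fin n → ℝ := Ut.mulVec w with hz
  -- A applied to v
  have hAv : A.mulVec v = H.mulVec z - μ • z := by
    rw [hA]
    show (H * Ut * Utᵀ - Ut * Utᵀ * H).mulVec v = _
    rw [Matrix.sub_mulVec]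
    rw [Matrix.mul_assoc, Matrix.mul_assoc]
    rw [← Matrix.mulVec_mulVec, ← Matrix.mulVec_mulVec, ← Matrix.mulVec_mulVec,
      ← Matrix.mulVec_mulVec, hev]
    simp only [Matrix.mulVec_smul]
    rfl
  -- fixed point identity : x = s • Utᵀ (Hz - μ z)
  have hxid : x = s • (Utᵀ.mulVec (H.mulVec z - μ • z)) := by
    have h1 : x = Utᵀ.mulVec v - (s / 2) • (Bᵀ.mulVec v) := by
      rw [hx, hUhateq]
      simp [transpose_sub, transpose_smul, Matrix.sub_mulVec, Matrix.smul_mulVec]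
    have h2 : Bᵀ.mulVec v = -(Utᵀ.mulVec (A.mulVec v)) := by
      rw [hBt]
      simp [Matrix.neg_mulVec, ← Matrix.mulVec_mulVec]
    rw [h2, hAv, ← hwdef, hw] at h1
    rw [smul_neg, sub_neg_eq_add] at h1
    -- h1 : x = (1/2) • x + (s/2) • (Utᵀ *ᵥ (H *ᵥ z - μ • z))
    have h3 : (1 / 2 : ℝ) • x = (s / 2) • (Utᵀ.mulVec (H.mulVec z - μ • z)) := by
      have h4 := congrArg (fun y => y - (1 / 2 : ℝ) • x) h1
      calc (1 / 2 : ℝ) • x = x - (1 / 2 : ℝ) • x := by module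
      _ = (1 / 2 : ℝ) • x + (s / 2) • (Utᵀ.mulVec (H.mulVec z - μ • z))
            - (1 / 2 : ℝ) • x := h4
      _ = (s / 2) • (Utᵀ.mulVec (H.mulVec z - μ • z)) := by module
    calc x = (2 : ℝ) • ((1 / 2 : ℝ) • x) := by module
    _ = (2 : ℝ) • ((s / 2) • (Utᵀ.mulVec (H.mulVec z - μ • z))) := by rw [h3]
    _ = s • (Utᵀ.mulVec (H.mulVec z - μ • z)) := by module
  -- x = 2 • w
  have hx2 : x = (2 : ℝ) • w := by rw [hw]; module
  have hUtx : Ut.mulVec x = (2 : ℝ) • z := by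
    rw [hx2, Matrix.mulVec_smul, hz]
  -- scalar identity
  have hdot : x ⬝ᵥ x = s * (2 * (z ⬝ᵥ H.mulVec z - μ * (z ⬝ᵥ z))) := by
    nth_rewrite 2 [hxid]
    rw [dotProduct_smul, dotProduct_mulVec, vecMul_transpose, hUtx, smul_dotProduct,
      dotProduct_sub, dotProduct_smul]
    simp only [smul_eq_mul]
  -- positivity facts
  have hvv : 0 < v ⬝ᵥ v := by
    rcases lt_or_eq_of_le (dsn v) with h | h
    · exact h
    · exact absurd (dotProduct_self_eq_zero.mp h.symm) hv
  have hμ1 : lam1 ≤ μ := by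
    have h := Matrix.PosSemidef.dotProduct_mulVec_nonneg hHlow v
    simp only [star_trivial, Matrix.sub_mulVec, Matrix.smul_mulVec, Matrix.one_mulVec,
      hev, dotProduct_sub, dotProduct_smul, smul_eq_mul] at h
    nlinarith
  have hμ2 : μ ≤ lamMax := by
    have h := Matrix.PosSemidef.dotProduct_mulVec_nonneg hHup v
    simp only [star_trivial, Matrix.sub_mulVec, Matrix.smul_mulVec, Matrix.one_mulVec,
      hev, dotProduct_sub, dotProduct_smul, smul_eq_mul] at h
    nlinarith
  have hzz : 0 ≤ z ⬝ᵥ z := dsn z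
  have hxx0 : 0 ≤ x ⬝ᵥ x := dsn x
  -- Loewner bound on z Hz
  have hHz : z ⬝ᵥ H.mulVec z ≤ lamMax * (z ⬝ᵥ z) := by
    have h := Matrix.PosSemidef.dotProduct_mulVec_nonneg hHup z
    simp only [star_trivial, Matrix.sub_mulVec, Matrix.smul_mulVec, Matrix.one_mulVec,
      dotProduct_sub, dotProduct_smul, smul_eq_mul] at h
    linarith
  -- z ⬝ z ≤ (1/4) x ⬝ x
  have hz4 : z ⬝ᵥ z ≤ (1 / 4 : ℝ) * (x ⬝ᵥ x) := by
    have e1 : z ⬝ᵥ z = w ⬝ᵥ ((Utᵀ * Ut).mulVec w) := by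
      nth_rewrite 2 [hz]
      rw [dotProduct_mulVec, ← Matrix.mulVec_transpose, hz, Matrix.mulVec_mulVec,
        dotProduct_comm]
    have e2 : w ⬝ᵥ ((Uᵀ * U).mulVec w) ≤ w ⬝ᵥ w := by
      have h := Matrix.PosSemidef.dotProduct_mulVec_nonneg hUle w
      simp only [star_trivial, Matrix.sub_mulVec, Matrix.one_mulVec, dotProduct_sub] at h
      linarith
    have e3 : 0 ≤ w ⬝ᵥ ((Bᵀ * B).mulVec w) := by
      rw [← Matrix.mulVec_mulVec, dotProduct_mulVec, vecMul_transpose]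
      exact dsn _
    have e4 : w ⬝ᵥ ((Utᵀ * Ut).mulVec w)
        = w ⬝ᵥ ((Uᵀ * U).mulVec w) - (s / 2 * (s / 2)) * (w ⬝ᵥ ((Bᵀ * B).mulVec w)) := by
      rw [hGramUt, Matrix.sub_mulVec, dotProduct_sub, Matrix.smul_mulVec,
        dotProduct_smul, smul_eq_mul]
    have e5 : w ⬝ᵥ w = (1 / 4 : ℝ) * (x ⬝ᵥ x) := by
      rw [hw, smul_dotProduct, dotProduct_smul, smul_eq_mul, smul_eq_mul]
      ring
    nlinarith [mul_nonneg (mul_nonneg (le_of_lt hs) (le_of_lt hs)) e3]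
  -- conclude x = 0
  have hxzero : x = 0 := by
    have hb1 : z ⬝ᵥ H.mulVec z - μ * (z ⬝ᵥ z) ≤ (lamMax - lam1) * (z ⬝ᵥ z) := by
      nlinarith [mul_nonneg (sub_nonneg.mpr hμ1) hzz]
    have hb2 : x ⬝ᵥ x ≤ 2 * s * ((lamMax - lam1) * (z ⬝ᵥ z)) := by
      rw [hdot]
      have h5 := mul_le_mul_of_nonneg_left hb1 (le_of_lt hs)
      nlinarith [h5]
    have hb3 : x ⬝ᵥ x ≤ (s * (lamMax - lam1) / 2) * (x ⬝ᵥ x) := by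
      have h5 : (lamMax - lam1) * (z ⬝ᵥ z) ≤ (lamMax - lam1) * ((1 / 4 : ℝ) * (x ⬝ᵥ x)) :=
        mul_le_mul_of_nonneg_left hz4 (by linarith)
      calc x ⬝ᵥ x ≤ 2 * s * ((lamMax - lam1) * (z ⬝ᵥ z)) := hb2
      _ ≤ 2 * s * ((lamMax - lam1) * ((1 / 4 : ℝ) * (x ⬝ᵥ x))) := by
          apply mul_le_mul_of_nonneg_left h5; positivity
      _ = (s * (lamMax - lam1) / 2) * (x ⬝ᵥ x) := by ring
    have h6 : x ⬝ᵥ x ≤ 0 := by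
      by_contra h7
      push_neg at h7
      nlinarith [hb3, h7, hstep]
    exact dotProduct_self_eq_zero.mp (le_antisymm h6 hxx0)
  refine ⟨hxzero, ?_⟩
  rw [hcorr]
  simp only [transpose_sub, transpose_smul, transpose_mul, Matrix.sub_mulVec,
    Matrix.smul_mulVec, ← Matrix.mulVec_mulVec, hHt]
  rw [hev, Matrix.mulVec_smul, ← hx, hxzero]
  simp
end
end

section
/- Energy decrease of one scheme step (Lemma 4.3): Let H be an n×n real symmetric matrix with λ₁·Iₙ ≤ H ≤ 0 in the Loewner order, where λ₁ < 0. Let U, Ũ, Û, U' be n×N real matrices and s ≥ 0 satisfy Û = U − s·𝒜_Ũ·Ũ, Ũ = (U + Û)/2, and U' = Û − s·H·Û·(I_N − Ûᵀ·Û). If Uᵀ·U ≤ I_N, then E(U) − E(U') ≥ s·(1/2 − (s/2)·|λ₁|)·‖𝒜_Ũ·Ũ‖_F². -/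
open Matrix

noncomputable section

/-- Frobenius norm of a real matrix. -/
def frobNorm {m k : ℕ} (A : Matrix (Fin m) (Fin k) ℝ) : ℝ :=
  Real.sqrt (∑ i, ∑ j, (A i j) ^ 2)

/-- The energy E(W) = (1/2)·tr(Wᵀ·H·W). -/
def energy {n N : ℕ} (H : Matrix (Fin n) (Fin n) ℝ) (W : Matrix (Fin n) (Fin N) ℝ) : ℝ :=
  (1 / 2 : ℝ) * Matrix.trace (Wᵀ * H * W)

/- ### Auxiliary lemmas -/

lemma psd_trace_nonneg {k : ℕ} {M : Matrix (Fin k) (Fin k) ℝ} (h : M.PosSemidef) :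
    0 ≤ M.trace := by
  rw [Matrix.trace]
  refine Finset.sum_nonneg fun i _ => ?_
  have := h.dotProduct_mulVec_nonneg (Pi.single i 1)
  simpa [dotProduct, Matrix.mulVec, Pi.single_apply] using this

lemma psd_transpose_mul_self {k m : ℕ} (A : Matrix (Fin m) (Fin k) ℝ) :
    (Aᵀ * A).PosSemidef := by
  simpa [Matrix.conjTranspose_eq_transpose_of_trivial] using
    Matrix.posSemidef_conjTranspose_mul_self A

lemma psd_congr {k m : ℕ} {M : Matrix (Fin k) (Fin k) ℝ} (h : M.PosSemidef)
    (B : Matrix (Fin m) (Fin k) ℝ) : (B * M * Bᵀ).PosSemidef := by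
  simpa [Matrix.conjTranspose_eq_transpose_of_trivial] using h.mul_mul_conjTranspose_same B

lemma psd_congr' {k m : ℕ} {M : Matrix (Fin k) (Fin k) ℝ} (h : M.PosSemidef)
    (B : Matrix (Fin k) (Fin m) ℝ) : (Bᵀ * M * B).PosSemidef := by
  simpa [Matrix.conjTranspose_eq_transpose_of_trivial] using h.conjTranspose_mul_mul_same B

lemma psd_smul {k : ℕ} {M : Matrix (Fin k) (Fin k) ℝ} (h : M.PosSemidef) (c : ℝ) (hc : 0 ≤ c) :
    (c • M).PosSemidef := by
  refine Matrix.PosSemidef.of_dotProduct_mulVec_nonneg ?_ (fun x => ?_)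
  · unfold Matrix.IsHermitian
    rw [Matrix.conjTranspose_smul, h.1.eq]
    simp
  · have := h.dotProduct_mulVec_nonneg x
    rw [Matrix.smul_mulVec, dotProduct_smul]
    simp only [star_trivial] at this ⊢
    positivity

lemma flip_psd {n N : ℕ} {W : Matrix (Fin n) (Fin N) ℝ}
    (h : (1 - Wᵀ * W).PosSemidef) : (1 - W * Wᵀ).PosSemidef := by
  refine Matrix.PosSemidef.of_dotProduct_mulVec_nonneg ?_ ?_
  · unfold Matrix.IsHermitian
    simp [Matrix.conjTranspose_eq_transpose_of_trivial, Matrix.transpose_sub, Matrix.transpose_mul]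
  · intro x
    simp only [star_trivial, Matrix.sub_mulVec, dotProduct_sub, Matrix.one_mulVec]
    set y : Fin N → ℝ := Wᵀ *ᵥ x with hy
    have hxy : x ⬝ᵥ (W * Wᵀ) *ᵥ x = y ⬝ᵥ y := by
      rw [← Matrix.mulVec_mulVec, Matrix.dotProduct_mulVec, ← hy]
      rw [← Matrix.mulVec_transpose]
    have hyz : y ⬝ᵥ (Wᵀ * W) *ᵥ y = (W *ᵥ y) ⬝ᵥ (W *ᵥ y) := by
      rw [← Matrix.mulVec_mulVec, Matrix.dotProduct_mulVec, Matrix.vecMul_transpose]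
    have h1 : (W *ᵥ y) ⬝ᵥ (W *ᵥ y) ≤ y ⬝ᵥ y := by
      have := h.dotProduct_mulVec_nonneg y
      simp only [star_trivial, Matrix.sub_mulVec, dotProduct_sub,
        Matrix.one_mulVec] at this
      rw [hyz] at this
      linarith
    have hyx : x ⬝ᵥ (W *ᵥ y) = y ⬝ᵥ y := by
      rw [Matrix.dotProduct_mulVec, ← Matrix.mulVec_transpose, ← hy]
    have hcs : (x ⬝ᵥ (W *ᵥ y)) ^ 2 ≤ (x ⬝ᵥ x) * ((W *ᵥ y) ⬝ᵥ (W *ᵥ y)) := by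
      have := Finset.sum_mul_sq_le_sq_mul_sq Finset.univ x (W *ᵥ y)
      simpa [dotProduct, sq, Finset.mul_sum] using this
    have hyy : 0 ≤ y ⬝ᵥ y := by
      simpa [star_trivial] using dotProduct_self_star_nonneg y
    have hxx : 0 ≤ x ⬝ᵥ x := by
      simpa [star_trivial] using dotProduct_self_star_nonneg x
    rw [hxy]
    nlinarith [h1, hcs, hyx, hyy, hxx]

lemma tr_sym {n N : ℕ} {H : Matrix (Fin n) (Fin n) ℝ} (hH : Hᵀ = H)
    (X Y : Matrix (Fin n) (Fin N) ℝ) :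
    Matrix.trace (Xᵀ * H * Y) = Matrix.trace (Yᵀ * H * X) := by
  rw [← Matrix.trace_transpose (Xᵀ * H * Y)]
  simp [Matrix.transpose_mul, hH, Matrix.mul_assoc]

lemma energy_sub_smul {n N : ℕ} {H : Matrix (Fin n) (Fin n) ℝ} (hH : Hᵀ = H)
    (X B : Matrix (Fin n) (Fin N) ℝ) (t : ℝ) :
    energy H (X - t • B) = energy H X - t * Matrix.trace (Bᵀ * H * X)
      + t ^ 2 * ((1 / 2) * Matrix.trace (Bᵀ * H * B)) := by
  unfold energy
  have h1 : (X - t • B)ᵀ * H * (X - t • B)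
      = Xᵀ * H * X - t • (Xᵀ * H * B) - t • (Bᵀ * H * X) + (t * t) • (Bᵀ * H * B) := by
    simp only [Matrix.transpose_sub, Matrix.transpose_smul, Matrix.sub_mul, Matrix.mul_sub,
      Matrix.smul_mul, Matrix.mul_smul, smul_smul]
    module
  rw [h1]
  simp only [Matrix.trace_add, Matrix.trace_sub, Matrix.trace_smul, smul_eq_mul]
  rw [tr_sym hH X B]
  ring

/-- Energy decrease of one scheme step (Lemma 4.3). -/
theorem energy_decrease_one_step
    {n N : ℕ} (H : Matrix (Fin n) (Fin n) ℝ) (hH : H.IsSymm)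
    (lam1 : ℝ) (hlam1 : lam1 < 0)
    (hHlow : loewnerLE (lam1 • (1 : Matrix (Fin n) (Fin n) ℝ)) H)
    (hHup : loewnerLE H 0)
    (U Ut Uhat U' : Matrix (Fin n) (Fin N) ℝ) (s : ℝ) (hs : 0 ≤ s)
    (hpred : Uhat = U - s • (commA H Ut * Ut))
    (hmid : Ut = (1 / 2 : ℝ) • (U + Uhat))
    (hcorr : U' = Uhat - s • (H * Uhat * (1 - Uhatᵀ * Uhat)))
    (hUle : loewnerLE (Uᵀ * U) 1) :
    energy H U - energy H U' ≥ s * (1 / 2 - s / 2 * |lam1|) * frobNorm (commA H Ut * Ut) ^ 2 := by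
  have hsymm : Hᵀ = H := hH
  set M := commA H Ut with hMdef
  set A := M * Ut with hAdef
  have hMT : Mᵀ = -M := by
    rw [hMdef]
    simp [commA, Matrix.transpose_sub, Matrix.transpose_mul, hsymm, Matrix.mul_assoc, neg_sub]
  -- basic relations between U, Ut, Uhat
  rw [hpred] at hmid
  have hUt : Ut = U - (s / 2) • A := by rw [hmid]; module
  have hUp : U = Ut + (s / 2) • A := by rw [hUt]; module
  have hUhat2 : Uhat = Ut - (s / 2) • A := by rw [hpred, hUt]; module
  -- cross terms vanish
  have hcross : Utᵀ * A + Aᵀ * Ut = 0 := by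
    rw [hAdef, Matrix.transpose_mul, hMT]
    simp [Matrix.mul_assoc, Matrix.neg_mul, Matrix.mul_neg]
  -- Gram matrix identities
  have expand : Uᵀ * U = Utᵀ * Ut + (s / 2) • (Utᵀ * A + Aᵀ * Ut)
      + ((s / 2) * (s / 2)) • (Aᵀ * A) := by
    rw [hUp]
    simp only [Matrix.transpose_add, Matrix.transpose_smul, Matrix.add_mul, Matrix.mul_add,
      Matrix.smul_mul, Matrix.mul_smul, smul_smul, smul_add]
    module
  have hSid : Utᵀ * Ut = Uᵀ * U - ((s / 2) * (s / 2)) • (Aᵀ * A) := by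
    rw [expand, hcross]; module
  have expand2 : Uhatᵀ * Uhat = Utᵀ * Ut - (s / 2) • (Utᵀ * A + Aᵀ * Ut)
      + ((s / 2) * (s / 2)) • (Aᵀ * A) := by
    rw [hUhat2]
    simp only [Matrix.transpose_sub, Matrix.transpose_smul, Matrix.sub_mul, Matrix.mul_sub,
      Matrix.smul_mul, Matrix.mul_smul, smul_smul, smul_sub]
    module
  have hhatid : Uhatᵀ * Uhat = Uᵀ * U := by
    rw [expand2, hcross, hSid]; module
  -- positive semidefiniteness facts
  have hUle' : (1 - Uᵀ * U).PosSemidef := hUle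
  have hSpsd : ((1 : Matrix (Fin N) (Fin N) ℝ) - Utᵀ * Ut).PosSemidef := by
    have hEq : (1 : Matrix (Fin N) (Fin N) ℝ) - Utᵀ * Ut
        = (1 - Uᵀ * U) + ((s / 2) * (s / 2)) • (Aᵀ * A) := by
      rw [hSid]; module
    rw [hEq]
    exact hUle'.add (psd_smul (psd_transpose_mul_self A) _ (by positivity))
  have hPpsd : ((1 : Matrix (Fin n) (Fin n) ℝ) - Ut * Utᵀ).PosSemidef := flip_psd hSpsd
  -- Step 1 : predictor energy drop
  have e1 : energy H U - energy H Uhat = s * Matrix.trace (Aᵀ * H * Ut) := by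
    have hU' : U = Ut - (-(s / 2)) • A := by rw [hUt]; module
    rw [hU', hUhat2, energy_sub_smul hsymm, energy_sub_smul hsymm]
    ring
  -- Step 2 : the key trace identity
  have c1 : Matrix.trace (Aᵀ * H * Ut) = - Matrix.trace (M * (H * (Ut * Utᵀ))) := by
    rw [hAdef, Matrix.transpose_mul, hMT]
    rw [Matrix.mul_assoc, Matrix.mul_assoc]
    rw [Matrix.trace_mul_comm]
    simp [Matrix.mul_assoc, Matrix.neg_mul, Matrix.mul_neg]
  have c3 : Matrix.trace (M * (Ut * Utᵀ * H)) = - Matrix.trace (M * (H * (Ut * Utᵀ))) := by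
    rw [← Matrix.trace_transpose (M * (Ut * Utᵀ * H))]
    simp only [Matrix.transpose_mul, Matrix.transpose_transpose, hsymm, hMT]
    rw [show H * (Ut * Utᵀ) * -M = -(H * (Ut * Utᵀ) * M) by simp [Matrix.mul_neg]]
    rw [Matrix.trace_neg, Matrix.trace_mul_comm]
  have c2 : Matrix.trace (M * M) = 2 * Matrix.trace (M * (H * (Ut * Utᵀ))) := by
    nth_rewrite 2 [hMdef]
    rw [show commA H Ut = H * (Ut * Utᵀ) - Ut * Utᵀ * H by rw [commA, Matrix.mul_assoc]]
    rw [Matrix.mul_sub, Matrix.trace_sub, c3]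
    ring
  have mtm : Matrix.trace (Mᵀ * M) = - Matrix.trace (M * M) := by
    rw [hMT]; simp [Matrix.neg_mul]
  have key : Matrix.trace (Aᵀ * H * Ut) = (1 / 2) * Matrix.trace (Mᵀ * M) := by
    rw [c1, mtm, c2]; ring
  -- Step 3 : ‖A‖² ≤ ‖M‖²
  have d2 : Matrix.trace (Aᵀ * A) = Matrix.trace (M * (Ut * Utᵀ) * Mᵀ) := by
    rw [hAdef, Matrix.transpose_mul, Matrix.trace_mul_comm]
    simp [Matrix.mul_assoc]
  have c4 : Matrix.trace (Mᵀ * M) - Matrix.trace (Aᵀ * A)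
      = Matrix.trace (M * (1 - Ut * Utᵀ) * Mᵀ) := by
    rw [Matrix.mul_sub, Matrix.mul_one, Matrix.sub_mul, Matrix.trace_sub, d2,
      Matrix.trace_mul_comm M Mᵀ]
  have c5 : 0 ≤ Matrix.trace (M * (1 - Ut * Utᵀ) * Mᵀ) := psd_trace_nonneg (psd_congr hPpsd M)
  have step3 : Matrix.trace (Aᵀ * A) ≤ Matrix.trace (Mᵀ * M) := by linarith
  -- Step 4 : corrector
  set D := (1 : Matrix (Fin N) (Fin N) ℝ) - Uhatᵀ * Uhat with hDdef
  set Y := H * Uhat * D with hYdef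
  have hDsym : Dᵀ = D := by
    rw [hDdef]
    simp [Matrix.transpose_sub, Matrix.transpose_mul]
  have hD : D.PosSemidef := by rw [hDdef, hhatid]; exact hUle'
  have e2 : energy H Uhat - energy H U'
      = s * Matrix.trace (Yᵀ * H * Uhat) - s ^ 2 * ((1 / 2) * Matrix.trace (Yᵀ * H * Y)) := by
    rw [hcorr, energy_sub_smul hsymm]
    ring
  have t1 : 0 ≤ Matrix.trace (Yᵀ * H * Uhat) := by
    have hZ : Yᵀ * H * Uhat = D * (Uhatᵀ * (H * (H * Uhat))) := by
      rw [hYdef]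
      simp [Matrix.transpose_mul, hDsym, hsymm, Matrix.mul_assoc]
    have hZ2 : Matrix.trace ((H * Uhat) * D * (H * Uhat)ᵀ)
        = Matrix.trace (D * (Uhatᵀ * (H * (H * Uhat)))) := by
      rw [Matrix.mul_assoc, Matrix.trace_mul_comm]
      simp [Matrix.transpose_mul, hsymm, Matrix.mul_assoc]
    rw [hZ, ← hZ2]
    exact psd_trace_nonneg (psd_congr hD (H * Uhat))
  have negH : (-H : Matrix (Fin n) (Fin n) ℝ).PosSemidef := by
    have : ((0 : Matrix (Fin n) (Fin n) ℝ) - H).PosSemidef := hHup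
    simpa using this
  have negH3 : ((-H) * (-H) * (-H) : Matrix (Fin n) (Fin n) ℝ).PosSemidef := by
    have := negH.mul_mul_conjTranspose_same (-H)
    simpa [Matrix.conjTranspose_eq_transpose_of_trivial, Matrix.transpose_neg, hsymm] using this
  have t2 : Matrix.trace (Yᵀ * H * Y) ≤ 0 := by
    have hW : Yᵀ * H * Y = - ((Uhat * D)ᵀ * ((-H) * (-H) * (-H)) * (Uhat * D)) := by
      rw [hYdef]
      simp [Matrix.transpose_mul, hDsym, hsymm, Matrix.mul_assoc, Matrix.neg_mul,
        Matrix.mul_neg]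
    rw [hW, Matrix.trace_neg, neg_nonpos]
    exact psd_trace_nonneg (psd_congr' negH3 (Uhat * D))
  -- Frobenius norm
  have hF2nn : 0 ≤ ∑ i, ∑ j, (A i j) ^ 2 :=
    Finset.sum_nonneg fun i _ => Finset.sum_nonneg fun j _ => sq_nonneg _
  have frob : frobNorm A ^ 2 = Matrix.trace (Aᵀ * A) := by
    rw [frobNorm, Real.sq_sqrt hF2nn, Matrix.trace]
    simp only [Matrix.diag_apply, Matrix.mul_apply, Matrix.transpose_apply, sq]
    exact Finset.sum_comm
  have hF2 : 0 ≤ Matrix.trace (Aᵀ * A) := psd_trace_nonneg (psd_transpose_mul_self A)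
  -- Assemble
  have k1 : s * Matrix.trace (Aᵀ * A) ≤ s * Matrix.trace (Mᵀ * M) :=
    mul_le_mul_of_nonneg_left step3 hs
  have k2 : 0 ≤ s * Matrix.trace (Yᵀ * H * Uhat) := mul_nonneg hs t1
  have k3 : s ^ 2 * Matrix.trace (Yᵀ * H * Y) ≤ 0 :=
    mul_nonpos_iff.2 (Or.inl ⟨sq_nonneg s, t2⟩)
  have k4 : 0 ≤ s ^ 2 * |lam1| * Matrix.trace (Aᵀ * A) :=
    mul_nonneg (mul_nonneg (sq_nonneg s) (abs_nonneg _)) hF2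
  have main1 : (1 / 2) * (s * Matrix.trace (Aᵀ * A)) ≤ s * Matrix.trace (Aᵀ * H * Ut) := by
    rw [key]; linarith only [k1]
  have total : (1 / 2) * (s * Matrix.trace (Aᵀ * A)) ≤ energy H U - energy H U' := by
    linarith only [e1, e2, k2, k3, main1]
  have final : s * (1 / 2 - s / 2 * |lam1|) * Matrix.trace (Aᵀ * A)
      ≤ (1 / 2) * (s * Matrix.trace (Aᵀ * A)) := by linarith only [k4]
  rw [ge_iff_le, frob]
  linarith only [total, final]
end
end

section
/- Exact energy dissipation of the predictor step: Let H be an n×n real symmetric matrix, U, Ũ, Û n×N real matrices and s ∈ ℝ with Û = U − s·𝒜_Ũ·Ũ and Ũ = (U + Û)/2. Then E(U) − E(Û) = (s/2)·‖𝒜_Ũ‖_F². -/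
open Matrix

noncomputable section

lemma skew_trace_aux {n : ℕ} (H P X : Matrix (Fin n) (Fin n) ℝ)
    (hH : Hᵀ = H) (hP : Pᵀ = P) (hX : X = H * P - P * H) :
    trace (P * (Xᵀ * H)) = (1 / 2 : ℝ) * trace (X * Xᵀ) := by
  have hXt : Xᵀ = -X := by
    rw [hX]; simp [transpose_sub, transpose_mul, hP, hH]
  have eX : X * Xᵀ = -(H*P*H*P) + H*P*P*H + P*H*H*P - P*H*P*H := by
    rw [hXt, hX]; noncomm_ring
  have eL : P * (Xᵀ * H) = -(P*H*P*H) + P*P*H*H := by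
    rw [hXt, hX]; noncomm_ring
  have c1 : trace (H*P*P*H) = trace (H*H*P*P) := by
    rw [Matrix.trace_mul_comm (H*P*P) H]; congr 1; noncomm_ring
  have c2 : trace (P*H*P*H) = trace (H*P*H*P) := by
    rw [Matrix.trace_mul_comm (P*H*P) H]; congr 1; noncomm_ring
  have c3 : trace (P*H*H*P) = trace (H*H*P*P) := by
    rw [Matrix.trace_mul_comm (P*H*H) P,
      show P*(P*H*H) = (P*P)*(H*H) from by noncomm_ring,
      Matrix.trace_mul_comm (P*P) (H*H)]
    congr 1; noncomm_ring
  have c4 : trace (P*P*H*H) = trace (H*H*P*P) := by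
    rw [show P*P*H*H = (P*P)*(H*H) from by noncomm_ring,
      Matrix.trace_mul_comm (P*P) (H*H)]
    congr 1; noncomm_ring
  rw [eX, eL]
  simp only [trace_add, trace_sub, trace_neg]
  rw [c1, c2, c3, c4]
  ring

/-- Exact energy dissipation of the predictor step. -/
theorem predictor_energy_dissipation
    {n N : ℕ} (H : Matrix (Fin n) (Fin n) ℝ) (hH : H.IsSymm)
    (U Ut Uhat : Matrix (Fin n) (Fin N) ℝ) (s : ℝ)
    (hpred : Uhat = U - s • (commA H Ut * Ut))
    (hmid : Ut = (1 / 2 : ℝ) • (U + Uhat)) :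
    energy H U - energy H Uhat = s / 2 * frobNorm (commA H Ut) ^ 2 := by
  have hHs : Hᵀ = H := hH
  have hX : commA H Ut = H * (Ut * Utᵀ) - (Ut * Utᵀ) * H := by
    simp [commA, Matrix.mul_assoc]
  have hPt : (Ut * Utᵀ)ᵀ = Ut * Utᵀ := by simp [transpose_mul]
  have hm := hmid
  rw [hpred] at hm
  have hU : U = Ut + (s / 2) • (commA H Ut * Ut) := by
    linear_combination (norm := module) (-1 : ℝ) • hm
  have hUhat : Uhat = Ut - (s / 2) • (commA H Ut * Ut) := by
    rw [hpred, hU]; module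
  have hfrob : frobNorm (commA H Ut) ^ 2 = trace (commA H Ut * (commA H Ut)ᵀ) := by
    rw [frobNorm, Real.sq_sqrt (by positivity)]
    simp [Matrix.trace, Matrix.mul_apply, Matrix.diag, sq]
  have hcross : trace ((commA H Ut * Ut)ᵀ * H * Ut)
      = trace (Utᵀ * H * (commA H Ut * Ut)) := by
    rw [← Matrix.trace_transpose (Utᵀ * H * (commA H Ut * Ut))]
    simp [transpose_mul, hHs, Matrix.mul_assoc]
  have hE : energy H U - energy H Uhat
      = s * trace ((commA H Ut * Ut)ᵀ * H * Ut) := by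
    rw [energy, energy, hU, hUhat]
    simp only [transpose_add, transpose_sub, transpose_smul, Matrix.add_mul,
      Matrix.sub_mul, Matrix.mul_add, Matrix.mul_sub, Matrix.smul_mul,
      Matrix.mul_smul, trace_add, trace_sub, trace_smul, smul_eq_mul]
    rw [hcross]
    ring
  have h1 : trace ((commA H Ut * Ut)ᵀ * H * Ut)
      = trace ((Ut * Utᵀ) * ((commA H Ut)ᵀ * H)) := by
    rw [transpose_mul, Matrix.trace_mul_comm]
    congr 1
    simp only [Matrix.mul_assoc]
  rw [hE, h1, skew_trace_aux H (Ut * Utᵀ) (commA H Ut) hHs hPt hX, hfrob]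
  ring
end
end

section
/- Lipschitz continuity of U ↦ 𝒜_U·U (Lemma 4.4, first inequality): Let H be an n×n real symmetric matrix with σ_max(H) ≤ M, and let U₁, U₂ be n×N real matrices with σ_max(U₁) ≤ α and σ_max(U₂) ≤ α. Then ‖𝒜_{U₁}·U₁ − 𝒜_{U₂}·U₂‖_F ≤ 6·α²·M·‖U₁ − U₂‖_F. -/
open Matrix

noncomputable section

/-- Largest singular value (ℓ²-operator norm) of a real matrix. -/
def sigmaMax {m k : ℕ} (A : Matrix (Fin m) (Fin k) ℝ) : ℝ :=
  ‖LinearMap.toContinuousLinearMap (Matrix.toEuclideanLin A)‖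

lemma frobNorm_nonneg {m k : ℕ} (A : Matrix (Fin m) (Fin k) ℝ) : 0 ≤ frobNorm A :=
  Real.sqrt_nonneg _

lemma frobNorm_transpose {m k : ℕ} (A : Matrix (Fin m) (Fin k) ℝ) :
    frobNorm Aᵀ = frobNorm A := by
  rw [frobNorm, frobNorm, Finset.sum_comm]
  simp [Matrix.transpose_apply]

section FrobInst
attribute [local instance] Matrix.frobeniusNormedAddCommGroup

lemma frob_eq_norm {m k : ℕ} (A : Matrix (Fin m) (Fin k) ℝ) : frobNorm A = ‖A‖ := by
  rw [Matrix.frobenius_norm_def, ← Real.sqrt_eq_rpow, frobNorm]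
  congr 1
  refine Finset.sum_congr rfl fun i _ => Finset.sum_congr rfl fun j _ => ?_
  rw [Real.rpow_two, Real.norm_eq_abs, ← sq_abs, sq]

lemma frob_add_le {m k : ℕ} (A B : Matrix (Fin m) (Fin k) ℝ) :
    frobNorm (A + B) ≤ frobNorm A + frobNorm B := by
  simp only [frob_eq_norm]; exact norm_add_le A B

lemma frob_sub_le {m k : ℕ} (A B : Matrix (Fin m) (Fin k) ℝ) :
    frobNorm (A - B) ≤ frobNorm A + frobNorm B := by
  simp only [frob_eq_norm]; exact norm_sub_le A B

end FrobInst

section L2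
open scoped Matrix.Norms.L2Operator

lemma sigma_eq_norm {m k : ℕ} (A : Matrix (Fin m) (Fin k) ℝ) : sigmaMax A = ‖A‖ := by
  rw [Matrix.l2_opNorm_def]; rfl

lemma sigmaMax_nonneg {m k : ℕ} (A : Matrix (Fin m) (Fin k) ℝ) : 0 ≤ sigmaMax A := by
  rw [sigma_eq_norm]; exact norm_nonneg _

lemma sigmaMax_transpose {m k : ℕ} (A : Matrix (Fin m) (Fin k) ℝ) :
    sigmaMax Aᵀ = sigmaMax A := by
  rw [sigma_eq_norm, sigma_eq_norm, ← Matrix.conjTranspose_eq_transpose_of_trivial,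
    Matrix.l2_opNorm_conjTranspose]

lemma sigmaMax_mul_le {m k l : ℕ} (A : Matrix (Fin m) (Fin k) ℝ) (B : Matrix (Fin k) (Fin l) ℝ) :
    sigmaMax (A * B) ≤ sigmaMax A * sigmaMax B := by
  simp only [sigma_eq_norm]; exact Matrix.l2_opNorm_mul A B

lemma frob_col_sq {m k : ℕ} (B : Matrix (Fin m) (Fin k) ℝ) :
    frobNorm B
      = Real.sqrt (∑ j, ‖(EuclideanSpace.equiv (Fin m) ℝ).symm (fun i => B i j)‖ ^ 2) := by
  rw [frobNorm, Finset.sum_comm]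
  congr 1
  refine Finset.sum_congr rfl fun j _ => ?_
  rw [EuclideanSpace.norm_eq, Real.sq_sqrt (by positivity)]
  refine Finset.sum_congr rfl fun i _ => ?_
  simp [Real.norm_eq_abs, sq_abs]

lemma frob_mul_le_op {m k l : ℕ} (A : Matrix (Fin m) (Fin k) ℝ) (B : Matrix (Fin k) (Fin l) ℝ) :
    frobNorm (A * B) ≤ sigmaMax A * frobNorm B := by
  rw [frob_col_sq (A * B), frob_col_sq B]
  have hcol : ∀ j, (fun i => (A * B) i j) = A *ᵥ (fun i => B i j) := by
    intro j; funext i; simp [Matrix.mul_apply, Matrix.mulVec, dotProduct]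
  calc Real.sqrt (∑ j, ‖(EuclideanSpace.equiv (Fin m) ℝ).symm (fun i => (A * B) i j)‖ ^ 2)
      ≤ Real.sqrt (∑ j,
          (sigmaMax A * ‖(EuclideanSpace.equiv (Fin k) ℝ).symm (fun i => B i j)‖) ^ 2) := by
        apply Real.sqrt_le_sqrt
        refine Finset.sum_le_sum fun j _ => ?_
        have h := Matrix.l2_opNorm_mulVec A ((EuclideanSpace.equiv (Fin k) ℝ).symm (fun i => B i j))
        rw [← sigma_eq_norm] at h
        refine pow_le_pow_left₀ (norm_nonneg _) ?_ 2
        simpa [hcol j] using h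
    _ = sigmaMax A
          * Real.sqrt (∑ j, ‖(EuclideanSpace.equiv (Fin k) ℝ).symm (fun i => B i j)‖ ^ 2) := by
        simp only [mul_pow, ← Finset.mul_sum]
        rw [Real.sqrt_mul (sq_nonneg _), Real.sqrt_sq (sigmaMax_nonneg A)]

lemma frob_op_le_frob {m k l : ℕ} (A : Matrix (Fin m) (Fin k) ℝ) (B : Matrix (Fin k) (Fin l) ℝ) :
    frobNorm (A * B) ≤ frobNorm A * sigmaMax B := by
  calc frobNorm (A * B) = frobNorm (Bᵀ * Aᵀ) := by rw [← Matrix.transpose_mul, frobNorm_transpose]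
    _ ≤ sigmaMax Bᵀ * frobNorm Aᵀ := frob_mul_le_op _ _
    _ = frobNorm A * sigmaMax B := by rw [sigmaMax_transpose, frobNorm_transpose, mul_comm]

end L2

/-- Lipschitz continuity of U ↦ 𝒜_U·U (Lemma 4.4, first inequality). -/
theorem commA_mul_lipschitz
    {n N : ℕ} (H : Matrix (Fin n) (Fin n) ℝ) (hH : H.IsSymm)
    (M α : ℝ) (hM : sigmaMax H ≤ M)
    (U₁ U₂ : Matrix (Fin n) (Fin N) ℝ)
    (hU₁ : sigmaMax U₁ ≤ α) (hU₂ : sigmaMax U₂ ≤ α) :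
    frobNorm (commA H U₁ * U₁ - commA H U₂ * U₂) ≤ 6 * α ^ 2 * M * frobNorm (U₁ - U₂) := by
  set D := U₁ - U₂ with hD
  have hM0 : 0 ≤ M := le_trans (sigmaMax_nonneg H) hM
  have hα0 : 0 ≤ α := le_trans (sigmaMax_nonneg U₁) hU₁
  have hfD : 0 ≤ frobNorm D := frobNorm_nonneg D
  have hU₁t : sigmaMax U₁ᵀ ≤ α := by rwa [sigmaMax_transpose]
  have hU₂t : sigmaMax U₂ᵀ ≤ α := by rwa [sigmaMax_transpose]
  have hDt : frobNorm Dᵀ = frobNorm D := frobNorm_transpose D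
  -- decomposition into six terms
  have hdecomp : commA H U₁ * U₁ - commA H U₂ * U₂
      = (H * (D * (U₁ᵀ * U₁)) + (H * (U₂ * (Dᵀ * U₁)) + H * (U₂ * (U₂ᵀ * D))))
        - (D * (U₁ᵀ * (H * U₁)) + (U₂ * (Dᵀ * (H * U₁)) + U₂ * (U₂ᵀ * (H * D)))) := by
    simp only [commA, hD, Matrix.transpose_sub, Matrix.sub_mul, Matrix.mul_sub]
    simp only [← Matrix.mul_assoc]
    abel
  -- bounds on the six terms
  have t1 : frobNorm (H * (D * (U₁ᵀ * U₁))) ≤ α ^ 2 * M * frobNorm D := by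
    calc frobNorm (H * (D * (U₁ᵀ * U₁)))
        ≤ sigmaMax H * frobNorm (D * (U₁ᵀ * U₁)) := frob_mul_le_op _ _
      _ ≤ sigmaMax H * (frobNorm D * sigmaMax (U₁ᵀ * U₁)) := by
          have := frob_op_le_frob D (U₁ᵀ * U₁)
          exact mul_le_mul_of_nonneg_left this (sigmaMax_nonneg H)
      _ ≤ M * (frobNorm D * (α * α)) := by
          have h1 : sigmaMax (U₁ᵀ * U₁) ≤ α * α :=
            le_trans (sigmaMax_mul_le _ _)
              (mul_le_mul hU₁t hU₁ (sigmaMax_nonneg _) hα0)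
          have h2 : frobNorm D * sigmaMax (U₁ᵀ * U₁) ≤ frobNorm D * (α * α) :=
            mul_le_mul_of_nonneg_left h1 hfD
          calc sigmaMax H * (frobNorm D * sigmaMax (U₁ᵀ * U₁))
              ≤ M * (frobNorm D * sigmaMax (U₁ᵀ * U₁)) :=
                mul_le_mul_of_nonneg_right hM (le_trans (mul_nonneg hfD (sigmaMax_nonneg _)) le_rfl)
            _ ≤ M * (frobNorm D * (α * α)) := mul_le_mul_of_nonneg_left h2 hM0
      _ = α ^ 2 * M * frobNorm D := by ring
  have t2 : frobNorm (H * (U₂ * (Dᵀ * U₁))) ≤ α ^ 2 * M * frobNorm D := by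
    have hin : frobNorm (Dᵀ * U₁) ≤ frobNorm D * α := by
      calc frobNorm (Dᵀ * U₁) ≤ frobNorm Dᵀ * sigmaMax U₁ := frob_op_le_frob _ _
        _ ≤ frobNorm D * α := by rw [hDt]; exact mul_le_mul_of_nonneg_left hU₁ hfD
    calc frobNorm (H * (U₂ * (Dᵀ * U₁)))
        ≤ sigmaMax H * frobNorm (U₂ * (Dᵀ * U₁)) := frob_mul_le_op _ _
      _ ≤ sigmaMax H * (sigmaMax U₂ * frobNorm (Dᵀ * U₁)) :=
          mul_le_mul_of_nonneg_left (frob_mul_le_op _ _) (sigmaMax_nonneg H)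
      _ ≤ M * (α * (frobNorm D * α)) := by
          have h2 : sigmaMax U₂ * frobNorm (Dᵀ * U₁) ≤ α * (frobNorm D * α) :=
            mul_le_mul hU₂ hin (frobNorm_nonneg _) hα0
          exact mul_le_mul hM h2
            (mul_nonneg (sigmaMax_nonneg _) (frobNorm_nonneg _)) hM0
      _ = α ^ 2 * M * frobNorm D := by ring
  have t3 : frobNorm (H * (U₂ * (U₂ᵀ * D))) ≤ α ^ 2 * M * frobNorm D := by
    have hin : frobNorm (U₂ᵀ * D) ≤ α * frobNorm D := by
      calc frobNorm (U₂ᵀ * D) ≤ sigmaMax U₂ᵀ * frobNorm D := frob_mul_le_op _ _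
        _ ≤ α * frobNorm D := mul_le_mul_of_nonneg_right hU₂t hfD
    calc frobNorm (H * (U₂ * (U₂ᵀ * D)))
        ≤ sigmaMax H * frobNorm (U₂ * (U₂ᵀ * D)) := frob_mul_le_op _ _
      _ ≤ sigmaMax H * (sigmaMax U₂ * frobNorm (U₂ᵀ * D)) :=
          mul_le_mul_of_nonneg_left (frob_mul_le_op _ _) (sigmaMax_nonneg H)
      _ ≤ M * (α * (α * frobNorm D)) := by
          have h2 : sigmaMax U₂ * frobNorm (U₂ᵀ * D) ≤ α * (α * frobNorm D) :=
            mul_le_mul hU₂ hin (frobNorm_nonneg _) hα0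
          exact mul_le_mul hM h2
            (mul_nonneg (sigmaMax_nonneg _) (frobNorm_nonneg _)) hM0
      _ = α ^ 2 * M * frobNorm D := by ring
  have t4 : frobNorm (D * (U₁ᵀ * (H * U₁))) ≤ α ^ 2 * M * frobNorm D := by
    have hin : sigmaMax (U₁ᵀ * (H * U₁)) ≤ α * (M * α) := by
      calc sigmaMax (U₁ᵀ * (H * U₁)) ≤ sigmaMax U₁ᵀ * sigmaMax (H * U₁) := sigmaMax_mul_le _ _
        _ ≤ α * (M * α) := by
            have h1 : sigmaMax (H * U₁) ≤ M * α :=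
              le_trans (sigmaMax_mul_le _ _) (mul_le_mul hM hU₁ (sigmaMax_nonneg _) hM0)
            exact mul_le_mul hU₁t h1 (sigmaMax_nonneg _) hα0
    calc frobNorm (D * (U₁ᵀ * (H * U₁)))
        ≤ frobNorm D * sigmaMax (U₁ᵀ * (H * U₁)) := frob_op_le_frob _ _
      _ ≤ frobNorm D * (α * (M * α)) := mul_le_mul_of_nonneg_left hin hfD
      _ = α ^ 2 * M * frobNorm D := by ring
  have t5 : frobNorm (U₂ * (Dᵀ * (H * U₁))) ≤ α ^ 2 * M * frobNorm D := by
    have hHU : sigmaMax (H * U₁) ≤ M * α :=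
      le_trans (sigmaMax_mul_le _ _) (mul_le_mul hM hU₁ (sigmaMax_nonneg _) hM0)
    have hin : frobNorm (Dᵀ * (H * U₁)) ≤ frobNorm D * (M * α) := by
      calc frobNorm (Dᵀ * (H * U₁)) ≤ frobNorm Dᵀ * sigmaMax (H * U₁) := frob_op_le_frob _ _
        _ ≤ frobNorm D * (M * α) := by rw [hDt]; exact mul_le_mul_of_nonneg_left hHU hfD
    calc frobNorm (U₂ * (Dᵀ * (H * U₁)))
        ≤ sigmaMax U₂ * frobNorm (Dᵀ * (H * U₁)) := frob_mul_le_op _ _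
      _ ≤ α * (frobNorm D * (M * α)) :=
          mul_le_mul hU₂ hin (frobNorm_nonneg _) hα0
      _ = α ^ 2 * M * frobNorm D := by ring
  have t6 : frobNorm (U₂ * (U₂ᵀ * (H * D))) ≤ α ^ 2 * M * frobNorm D := by
    have hHD : frobNorm (H * D) ≤ M * frobNorm D := by
      calc frobNorm (H * D) ≤ sigmaMax H * frobNorm D := frob_mul_le_op _ _
        _ ≤ M * frobNorm D := mul_le_mul_of_nonneg_right hM hfD
    have hin : frobNorm (U₂ᵀ * (H * D)) ≤ α * (M * frobNorm D) := by
      calc frobNorm (U₂ᵀ * (H * D)) ≤ sigmaMax U₂ᵀ * frobNorm (H * D) := frob_mul_le_op _ _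
        _ ≤ α * (M * frobNorm D) :=
            mul_le_mul hU₂t hHD (frobNorm_nonneg _) hα0
    calc frobNorm (U₂ * (U₂ᵀ * (H * D)))
        ≤ sigmaMax U₂ * frobNorm (U₂ᵀ * (H * D)) := frob_mul_le_op _ _
      _ ≤ α * (α * (M * frobNorm D)) :=
          mul_le_mul hU₂ hin (frobNorm_nonneg _) hα0
      _ = α ^ 2 * M * frobNorm D := by ring
  -- triangle inequality
  rw [hdecomp]
  have tri : frobNorm
      ((H * (D * (U₁ᵀ * U₁)) + (H * (U₂ * (Dᵀ * U₁)) + H * (U₂ * (U₂ᵀ * D))))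
        - (D * (U₁ᵀ * (H * U₁)) + (U₂ * (Dᵀ * (H * U₁)) + U₂ * (U₂ᵀ * (H * D)))))
      ≤ frobNorm (H * (D * (U₁ᵀ * U₁))) + (frobNorm (H * (U₂ * (Dᵀ * U₁)))
          + frobNorm (H * (U₂ * (U₂ᵀ * D))))
        + (frobNorm (D * (U₁ᵀ * (H * U₁))) + (frobNorm (U₂ * (Dᵀ * (H * U₁)))
          + frobNorm (U₂ * (U₂ᵀ * (H * D))))) := by
    refine le_trans (frob_sub_le _ _) (add_le_add ?_ ?_) <;>
      refine le_trans (frob_add_le _ _) (add_le_add le_rfl (frob_add_le _ _))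
  refine le_trans tri ?_
  have : 6 * α ^ 2 * M * frobNorm D
      = α ^ 2 * M * frobNorm D + (α ^ 2 * M * frobNorm D + α ^ 2 * M * frobNorm D)
        + (α ^ 2 * M * frobNorm D + (α ^ 2 * M * frobNorm D + α ^ 2 * M * frobNorm D)) := by
    ring
  rw [this]
  exact add_le_add (add_le_add t1 (add_le_add t2 t3)) (add_le_add t4 (add_le_add t5 t6))
end
end

section
/- Lipschitz continuity of U ↦ 𝒜_U (Lemma 4.4, second inequality): Let H be an n×n real symmetric matrix with σ_max(H) ≤ M, and let U₁, U₂ be n×N real matrices with σ_max(U₁) ≤ α and σ_max(U₂) ≤ α. Then ‖𝒜_{U₁} − 𝒜_{U₂}‖_F ≤ 4·α·M·‖U₁ − U₂‖_F. -/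
open Matrix

noncomputable section

namespace AuxCommA

noncomputable def euc {m k : ℕ} (A : Matrix (Fin m) (Fin k) ℝ) :
    EuclideanSpace ℝ (Fin m × Fin k) :=
  (WithLp.equiv 2 _).symm (fun p => A p.1 p.2)

lemma frobNorm_eq_norm {m k : ℕ} (A : Matrix (Fin m) (Fin k) ℝ) :
    frobNorm A = ‖euc A‖ := by
  rw [EuclideanSpace.norm_eq, frobNorm]
  congr 1
  rw [← Finset.sum_product']
  simp [euc, Fintype.sum_prod_type, sq_abs]

lemma euc_add {m k : ℕ} (A B : Matrix (Fin m) (Fin k) ℝ) :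
    euc (A + B) = euc A + euc B := rfl

lemma euc_neg {m k : ℕ} (A : Matrix (Fin m) (Fin k) ℝ) :
    euc (-A) = -euc A := rfl

lemma frobNorm_nonneg {m k : ℕ} (A : Matrix (Fin m) (Fin k) ℝ) :
    0 ≤ frobNorm A := Real.sqrt_nonneg _

lemma frobNorm_sub_le {m k : ℕ} (A B : Matrix (Fin m) (Fin k) ℝ) :
    frobNorm (A - B) ≤ frobNorm A + frobNorm B := by
  rw [frobNorm_eq_norm, frobNorm_eq_norm, frobNorm_eq_norm, sub_eq_add_neg, euc_add, euc_neg]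
  exact (norm_add_le _ _).trans (by rw [norm_neg])

lemma frobNorm_add_le {m k : ℕ} (A B : Matrix (Fin m) (Fin k) ℝ) :
    frobNorm (A + B) ≤ frobNorm A + frobNorm B := by
  rw [frobNorm_eq_norm, frobNorm_eq_norm, frobNorm_eq_norm, euc_add]
  exact norm_add_le _ _

lemma frobNorm_transpose {m k : ℕ} (A : Matrix (Fin m) (Fin k) ℝ) :
    frobNorm Aᵀ = frobNorm A := by
  rw [frobNorm, frobNorm, Finset.sum_comm]
  rfl

noncomputable def colE {m k : ℕ} (A : Matrix (Fin m) (Fin k) ℝ) (j : Fin k) :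
    EuclideanSpace ℝ (Fin m) :=
  (WithLp.equiv 2 _).symm (fun i => A i j)

lemma sq_frobNorm {m k : ℕ} (A : Matrix (Fin m) (Fin k) ℝ) :
    frobNorm A ^ 2 = ∑ j, ‖colE A j‖ ^ 2 := by
  rw [frobNorm, Real.sq_sqrt (by positivity), Finset.sum_comm]
  refine Finset.sum_congr rfl fun j _ => ?_
  rw [EuclideanSpace.norm_eq, Real.sq_sqrt (by positivity)]
  simp [colE, sq_abs]

lemma colE_mul {m k l : ℕ} (A : Matrix (Fin m) (Fin k) ℝ)
    (B : Matrix (Fin k) (Fin l) ℝ) (j : Fin l) :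
    colE (A * B) j = Matrix.toEuclideanLin A (colE B j) := by
  rw [Matrix.toEuclideanLin_apply]
  ext i
  simp [colE, Matrix.mul_apply, Matrix.mulVec, dotProduct]

/-- Key inequality: `‖A·B‖_F ≤ σ_max(A)·‖B‖_F`. -/
lemma frobNorm_mul_le {m k l : ℕ} (A : Matrix (Fin m) (Fin k) ℝ)
    (B : Matrix (Fin k) (Fin l) ℝ) :
    frobNorm (A * B) ≤ sigmaMax A * frobNorm B := by
  have hσ : 0 ≤ sigmaMax A := norm_nonneg _
  have hsq : frobNorm (A * B) ^ 2 ≤ (sigmaMax A * frobNorm B) ^ 2 := by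
    rw [sq_frobNorm, mul_pow, sq_frobNorm, Finset.mul_sum]
    refine Finset.sum_le_sum fun j _ => ?_
    rw [colE_mul]
    have h := (LinearMap.toContinuousLinearMap (Matrix.toEuclideanLin A)).le_opNorm (colE B j)
    calc ‖Matrix.toEuclideanLin A (colE B j)‖ ^ 2
        ≤ (sigmaMax A * ‖colE B j‖) ^ 2 := by
          exact pow_le_pow_left₀ (norm_nonneg _) h 2
      _ = sigmaMax A ^ 2 * ‖colE B j‖ ^ 2 := by ring
  have h := Real.sqrt_le_sqrt hsq
  rwa [Real.sqrt_sq (frobNorm_nonneg _),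
    Real.sqrt_sq (mul_nonneg hσ (frobNorm_nonneg _))] at h

/-- `‖A·B‖_F ≤ ‖A‖_F·σ_max(B)` via transposition. -/
lemma frobNorm_mul_le' {m k l : ℕ} (A : Matrix (Fin m) (Fin k) ℝ)
    (B : Matrix (Fin k) (Fin l) ℝ) :
    frobNorm (A * B) ≤ sigmaMax Bᵀ * frobNorm A := by
  calc frobNorm (A * B) = frobNorm (A * B)ᵀ := (frobNorm_transpose _).symm
    _ = frobNorm (Bᵀ * Aᵀ) := by rw [Matrix.transpose_mul]
    _ ≤ sigmaMax Bᵀ * frobNorm Aᵀ := frobNorm_mul_le _ _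
    _ = sigmaMax Bᵀ * frobNorm A := by rw [frobNorm_transpose]

end AuxCommA

/-- Lipschitz continuity of U ↦ 𝒜_U (Lemma 4.4, second inequality). -/
theorem commA_lipschitz
    {n N : ℕ} (H : Matrix (Fin n) (Fin n) ℝ) (hH : H.IsSymm)
    (M α : ℝ) (hM : sigmaMax H ≤ M)
    (U₁ U₂ : Matrix (Fin n) (Fin N) ℝ)
    (hU₁ : sigmaMax U₁ ≤ α) (hU₂ : sigmaMax U₂ ≤ α) :
    frobNorm (commA H U₁ - commA H U₂) ≤ 4 * α * M * frobNorm (U₁ - U₂) := by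
  open AuxCommA in
  set D : Matrix (Fin n) (Fin n) ℝ := U₁ * U₁ᵀ - U₂ * U₂ᵀ with hD
  have hα : 0 ≤ α := le_trans (norm_nonneg _) hU₁
  have hM0 : 0 ≤ M := le_trans (norm_nonneg _) hM
  -- D decomposition
  have hDdec : D = (U₁ - U₂) * U₁ᵀ + U₂ * (U₁ - U₂)ᵀ := by
    rw [hD, Matrix.transpose_sub]
    simp only [Matrix.sub_mul, Matrix.mul_sub]
    abel
  -- bound on frobNorm D
  have hDbound : frobNorm D ≤ 2 * α * frobNorm (U₁ - U₂) := by
    rw [hDdec]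
    have h1 : frobNorm ((U₁ - U₂) * U₁ᵀ) ≤ α * frobNorm (U₁ - U₂) := by
      calc frobNorm ((U₁ - U₂) * U₁ᵀ) ≤ sigmaMax U₁ᵀᵀ * frobNorm (U₁ - U₂) :=
            AuxCommA.frobNorm_mul_le' _ _
        _ = sigmaMax U₁ * frobNorm (U₁ - U₂) := by rw [Matrix.transpose_transpose]
        _ ≤ α * frobNorm (U₁ - U₂) :=
            mul_le_mul_of_nonneg_right hU₁ (AuxCommA.frobNorm_nonneg _)
    have h2 : frobNorm (U₂ * (U₁ - U₂)ᵀ) ≤ α * frobNorm (U₁ - U₂) := by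
      calc frobNorm (U₂ * (U₁ - U₂)ᵀ) ≤ sigmaMax U₂ * frobNorm (U₁ - U₂)ᵀ :=
            AuxCommA.frobNorm_mul_le _ _
        _ = sigmaMax U₂ * frobNorm (U₁ - U₂) := by rw [AuxCommA.frobNorm_transpose]
        _ ≤ α * frobNorm (U₁ - U₂) :=
            mul_le_mul_of_nonneg_right hU₂ (AuxCommA.frobNorm_nonneg _)
    calc frobNorm ((U₁ - U₂) * U₁ᵀ + U₂ * (U₁ - U₂)ᵀ)
        ≤ frobNorm ((U₁ - U₂) * U₁ᵀ) + frobNorm (U₂ * (U₁ - U₂)ᵀ) :=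
          AuxCommA.frobNorm_add_le _ _
      _ ≤ α * frobNorm (U₁ - U₂) + α * frobNorm (U₁ - U₂) := add_le_add h1 h2
      _ = 2 * α * frobNorm (U₁ - U₂) := by ring
  -- commutator difference
  have hcomm : commA H U₁ - commA H U₂ = H * D - D * H := by
    simp only [commA, hD, Matrix.mul_sub, Matrix.sub_mul, Matrix.mul_assoc]
    abel
  have hHD : frobNorm (H * D) ≤ M * frobNorm D :=
    le_trans (AuxCommA.frobNorm_mul_le _ _)
      (mul_le_mul_of_nonneg_right hM (AuxCommA.frobNorm_nonneg _))
  have hDH : frobNorm (D * H) ≤ M * frobNorm D := by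
    calc frobNorm (D * H) ≤ sigmaMax Hᵀ * frobNorm D := AuxCommA.frobNorm_mul_le' _ _
      _ = sigmaMax H * frobNorm D := by rw [hH.eq]
      _ ≤ M * frobNorm D := mul_le_mul_of_nonneg_right hM (AuxCommA.frobNorm_nonneg _)
  calc frobNorm (commA H U₁ - commA H U₂)
      = frobNorm (H * D - D * H) := by rw [hcomm]
    _ ≤ frobNorm (H * D) + frobNorm (D * H) := AuxCommA.frobNorm_sub_le _ _
    _ ≤ M * frobNorm D + M * frobNorm D := add_le_add hHD hDH
    _ = 2 * M * frobNorm D := by ring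
    _ ≤ 2 * M * (2 * α * frobNorm (U₁ - U₂)) :=
        mul_le_mul_of_nonneg_left hDbound (by positivity)
    _ = 4 * α * M * frobNorm (U₁ - U₂) := by ring
end
end

section
/- Vanishing of the rotational gradient along the iteration (part of Theorem 4.1): Let H be an n×n real symmetric matrix with λ₁·Iₙ ≤ H ≤ 0 in the Loewner order, where λ₁ < 0. Let (Uₙ)ₙ, (Ûₙ₊₁)ₙ, (Ũₙ)ₙ be n×N real matrices and (sₙ)ₙ positive step sizes such that for every n: Ûₙ₊₁ = Uₙ − sₙ·𝒜_{Ũₙ}·Ũₙ, Ũₙ = (Uₙ + Ûₙ₊₁)/2, and Uₙ₊₁ = Ûₙ₊₁ − sₙ·H·Ûₙ₊₁·(I_N − Ûₙ₊₁ᵀ·Ûₙ₊₁). Assume Uₙᵀ·Uₙ ≤ I_N for every n, that sₙ ≤ δ for all n with δ·|λ₁| < 1, and that Σₙ sₙ = ∞. Then liminf_{n→∞} ‖𝒜_{Ũₙ}·Ũₙ‖_F = 0, i.e. for every ε > 0 there exist infinitely many n with ‖𝒜_{Ũₙ}·Ũₙ‖_F < ε. -/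
open Matrix Filter

noncomputable section

/-! ### Auxiliary lemmas -/

lemma psd_trace_nonneg' {m : ℕ} {A : Matrix (Fin m) (Fin m) ℝ} (hA : A.PosSemidef) :
    0 ≤ A.trace := by
  rw [Matrix.trace]
  refine Finset.sum_nonneg fun i _ => ?_
  have := hA.dotProduct_mulVec_nonneg (Pi.single i 1)
  simpa [Matrix.mulVec_single, Matrix.diag] using this

lemma psd_trace_mul_nonneg {m : ℕ} {A S : Matrix (Fin m) (Fin m) ℝ}
    (hA : A.PosSemidef) (hS : S.PosSemidef) : 0 ≤ (A * S).trace := by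
  obtain ⟨B, rfl⟩ : ∃ B : Matrix (Fin m) (Fin m) ℝ, A = Bᴴ * B := by
    open scoped MatrixOrder in exact CStarAlgebra.nonneg_iff_eq_star_mul_self.mp hA.nonneg
  have h1 : (Bᴴ * B * S).trace = (B * S * Bᴴ).trace := by
    rw [Matrix.trace_mul_cycle, Matrix.trace_mul_cycle]
  rw [h1]
  exact psd_trace_nonneg' (hS.mul_mul_conjTranspose_same B)

lemma psd_transpose_mul_self_s14 {n N : ℕ} (G : Matrix (Fin n) (Fin N) ℝ) :
    (Gᵀ * G).PosSemidef := by
  have := Matrix.posSemidef_conjTranspose_mul_self G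
  rwa [Matrix.conjTranspose_eq_transpose_of_trivial] at this

lemma trace_conj_nonneg {n N : ℕ} {S : Matrix (Fin n) (Fin n) ℝ} (hS : S.PosSemidef)
    (M : Matrix (Fin n) (Fin N) ℝ) : 0 ≤ Matrix.trace (Mᵀ * S * M) := by
  have := hS.conjTranspose_mul_mul_same M
  rw [Matrix.conjTranspose_eq_transpose_of_trivial] at this
  exact psd_trace_nonneg' this

lemma one_sub_self_mul_transpose_psd {n N : ℕ} (W : Matrix (Fin n) (Fin N) ℝ)
    (h : ((1 : Matrix (Fin N) (Fin N) ℝ) - Wᵀ * W).PosSemidef) :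
    ((1 : Matrix (Fin n) (Fin n) ℝ) - W * Wᵀ).PosSemidef := by
  have key : ∀ z : Fin N → ℝ, (W *ᵥ z) ⬝ᵥ (W *ᵥ z) ≤ z ⬝ᵥ z := by
    intro z
    have := h.dotProduct_mulVec_nonneg z
    have hz : star z = z := by simp
    rw [hz, Matrix.sub_mulVec, dotProduct_sub, Matrix.one_mulVec] at this
    have h2 : z ⬝ᵥ (Wᵀ * W) *ᵥ z = (W *ᵥ z) ⬝ᵥ (W *ᵥ z) := by
      rw [← Matrix.mulVec_mulVec, Matrix.dotProduct_mulVec, ← Matrix.mulVec_transpose,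
        Matrix.transpose_transpose]
    rw [h2] at this
    linarith
  refine Matrix.PosSemidef.of_dotProduct_mulVec_nonneg ?_ ?_
  · have : ((1 : Matrix (Fin n) (Fin n) ℝ) - W * Wᵀ).IsSymm := by
      rw [Matrix.IsSymm, Matrix.transpose_sub, Matrix.transpose_one, Matrix.transpose_mul,
        Matrix.transpose_transpose]
    rw [Matrix.IsHermitian, Matrix.conjTranspose_eq_transpose_of_trivial]
    exact this
  · intro x
    have hx : star x = x := by simp
    rw [hx, Matrix.sub_mulVec, dotProduct_sub, Matrix.one_mulVec]
    have h2 : x ⬝ᵥ (W * Wᵀ) *ᵥ x = (Wᵀ *ᵥ x) ⬝ᵥ (Wᵀ *ᵥ x) := by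
      rw [← Matrix.mulVec_mulVec, Matrix.dotProduct_mulVec, ← Matrix.mulVec_transpose]
    rw [h2]
    set y := Wᵀ *ᵥ x with hy
    have h3 : y ⬝ᵥ y = x ⬝ᵥ (W *ᵥ y) := by
      rw [hy, Matrix.dotProduct_mulVec, ← Matrix.mulVec_transpose, Matrix.transpose_transpose,
        dotProduct_comm]
    have cs : (x ⬝ᵥ (W *ᵥ y)) ^ 2 ≤ (x ⬝ᵥ x) * ((W *ᵥ y) ⬝ᵥ (W *ᵥ y)) := by
      have := Finset.sum_mul_sq_le_sq_mul_sq Finset.univ x (W *ᵥ y)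
      simpa [dotProduct, pow_two] using this
    have h4 : (y ⬝ᵥ y) ^ 2 ≤ (x ⬝ᵥ x) * (y ⬝ᵥ y) := by
      calc (y ⬝ᵥ y) ^ 2 = (x ⬝ᵥ (W *ᵥ y)) ^ 2 := by rw [h3]
        _ ≤ (x ⬝ᵥ x) * ((W *ᵥ y) ⬝ᵥ (W *ᵥ y)) := cs
        _ ≤ (x ⬝ᵥ x) * (y ⬝ᵥ y) := by
            have hxx : 0 ≤ x ⬝ᵥ x := Finset.sum_nonneg (fun i _ => mul_self_nonneg (x i))
            exact mul_le_mul_of_nonneg_left (key y) hxx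
    have hyy : 0 ≤ y ⬝ᵥ y := Finset.sum_nonneg (fun i _ => mul_self_nonneg (y i))
    rcases eq_or_lt_of_le hyy with h0 | h0
    · have hxx : (0:ℝ) ≤ x ⬝ᵥ x := Finset.sum_nonneg (fun i _ => mul_self_nonneg (x i))
      rw [← h0]; linarith
    · nlinarith

lemma trace4 {n : ℕ} (A B C D : Matrix (Fin n) (Fin n) ℝ) :
    Matrix.trace (A*B*C*D) = Matrix.trace (D*A*B*C) := by
  rw [Matrix.trace_mul_comm]
  congr 1
  noncomm_ring

lemma trace_conj_eq {n N : ℕ} (M : Matrix (Fin n) (Fin n) ℝ) (W : Matrix (Fin n) (Fin N) ℝ) :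
    Matrix.trace (Wᵀ * M * W) = Matrix.trace (M * (W * Wᵀ)) := by
  rw [Matrix.trace_mul_cycle, Matrix.trace_mul_comm]

lemma commA_eq {n N : ℕ} (H : Matrix (Fin n) (Fin n) ℝ) (W : Matrix (Fin n) (Fin N) ℝ) :
    commA H W = H * (W * Wᵀ) - (W * Wᵀ) * H := by
  rw [commA, Matrix.mul_assoc]

lemma commA_transpose {n N : ℕ} {H : Matrix (Fin n) (Fin n) ℝ} (hH : Hᵀ = H)
    (W : Matrix (Fin n) (Fin N) ℝ) : (commA H W)ᵀ = -(commA H W) := by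
  rw [commA_eq]
  simp only [Matrix.transpose_sub, Matrix.transpose_mul, Matrix.transpose_transpose, hH]
  noncomm_ring

lemma key_traces {n N : ℕ} {H : Matrix (Fin n) (Fin n) ℝ} (hH : Hᵀ = H)
    (W : Matrix (Fin n) (Fin N) ℝ) :
    2 * Matrix.trace ((commA H W * W)ᵀ * H * W)
      = Matrix.trace ((commA H W)ᵀ * commA H W) := by
  set P := W * Wᵀ with hPdef
  have hP : Pᵀ = P := by rw [hPdef, Matrix.transpose_mul, Matrix.transpose_transpose]
  have hA : commA H W = H * P - P * H := commA_eq H W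
  have hAT : (commA H W)ᵀ = P * H - H * P := by
    rw [hA]
    simp only [Matrix.transpose_sub, Matrix.transpose_mul, hH, hP]
  have e0 : (commA H W * W)ᵀ * H * W = Wᵀ * ((commA H W)ᵀ * H) * W := by
    rw [Matrix.transpose_mul]; simp only [Matrix.mul_assoc]
  have e1 : Matrix.trace ((commA H W * W)ᵀ * H * W)
      = Matrix.trace (P*H*H*P) - Matrix.trace (H*P*H*P) := by
    rw [e0, trace_conj_eq, ← hPdef, hAT]
    have : (P * H - H * P) * H * P = P*H*H*P - H*P*H*P := by noncomm_ring
    rw [this, Matrix.trace_sub]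
  have e2 : Matrix.trace ((commA H W)ᵀ * commA H W)
      = (Matrix.trace (P*H*H*P) - Matrix.trace (P*H*P*H))
        - (Matrix.trace (H*P*H*P) - Matrix.trace (H*P*P*H)) := by
    rw [hAT, hA]
    have : (P * H - H * P) * (H * P - P * H)
        = (P*H*H*P - P*H*P*H) - (H*P*H*P - H*P*P*H) := by noncomm_ring
    rw [this, Matrix.trace_sub, Matrix.trace_sub, Matrix.trace_sub]
  have c1 : Matrix.trace (H*P*H*P) = Matrix.trace (P*H*P*H) := trace4 H P H P
  have c2 : Matrix.trace (H*P*P*H) = Matrix.trace (P*H*H*P) := by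
    rw [trace4 H P P H, trace4 H H P P]
  rw [e1, e2]
  linarith [c1, c2]

lemma key_frob {n N : ℕ} (H : Matrix (Fin n) (Fin n) ℝ) (W : Matrix (Fin n) (Fin N) ℝ)
    (h : ((1 : Matrix (Fin n) (Fin n) ℝ) - W * Wᵀ).PosSemidef) :
    Matrix.trace ((commA H W * W)ᵀ * (commA H W * W))
      ≤ Matrix.trace ((commA H W)ᵀ * commA H W) := by
  set A := commA H W with hAdef
  have e0 : (A * W)ᵀ * (A * W) = Wᵀ * (Aᵀ * A) * W := by
    rw [Matrix.transpose_mul]; simp only [Matrix.mul_assoc]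
  have e1 : Matrix.trace ((A * W)ᵀ * (A * W)) = Matrix.trace ((Aᵀ * A) * (W * Wᵀ)) := by
    rw [e0, trace_conj_eq]
  have e2 : Matrix.trace ((Aᵀ * A) * ((1 : Matrix (Fin n) (Fin n) ℝ) - W * Wᵀ))
      = Matrix.trace (Aᵀ * A) - Matrix.trace ((Aᵀ * A) * (W * Wᵀ)) := by
    rw [Matrix.mul_sub, Matrix.mul_one, Matrix.trace_sub]
  have e3 : 0 ≤ Matrix.trace ((Aᵀ * A) * ((1 : Matrix (Fin n) (Fin n) ℝ) - W * Wᵀ)) :=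
    psd_trace_mul_nonneg (psd_transpose_mul_self_s14 A) h
  rw [e1]
  linarith [e2 ▸ e3]

lemma expand_quadratic {n N : ℕ} {H : Matrix (Fin n) (Fin n) ℝ} (hH : Hᵀ = H)
    (X G : Matrix (Fin n) (Fin N) ℝ) (c : ℝ) :
    Matrix.trace ((X + c • G)ᵀ * H * (X + c • G))
      = Matrix.trace (Xᵀ * H * X) + 2 * c * Matrix.trace (Gᵀ * H * X)
        + c ^ 2 * Matrix.trace (Gᵀ * H * G) := by
  have hsym : Matrix.trace (Xᵀ * H * G) = Matrix.trace (Gᵀ * H * X) := by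
    rw [← Matrix.trace_transpose]
    congr 1
    simp only [Matrix.transpose_mul, Matrix.transpose_transpose, hH, Matrix.mul_assoc]
  simp only [Matrix.transpose_add, Matrix.transpose_smul, Matrix.add_mul, Matrix.mul_add,
    Matrix.smul_mul, Matrix.mul_smul, Matrix.trace_add, Matrix.trace_smul, smul_eq_mul,
    smul_smul, hsym]
  ring

lemma expand_gram {n N : ℕ} (X G : Matrix (Fin n) (Fin N) ℝ) (c : ℝ)
    (hskew : Gᵀ * X = -(Xᵀ * G)) :
    (X + c • G)ᵀ * (X + c • G) = Xᵀ * X + (c ^ 2) • (Gᵀ * G) := by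
  simp only [Matrix.transpose_add, Matrix.transpose_smul, Matrix.add_mul, Matrix.mul_add,
    Matrix.smul_mul, Matrix.mul_smul, hskew, smul_smul]
  rw [smul_neg, smul_add, smul_smul, ← pow_two]
  abel

/-- One full step of the scheme decreases the energy by at least `σ·‖𝒜_ũ·ũ‖²`. -/
lemma step_ineq {n N : ℕ} {H : Matrix (Fin n) (Fin n) ℝ} (hH : Hᵀ = H)
    (hHup : ((0 : Matrix (Fin n) (Fin n) ℝ) - H).PosSemidef)
    (u uh ut u' : Matrix (Fin n) (Fin N) ℝ) (σ : ℝ) (hσ : 0 < σ)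
    (hpred : uh = u - σ • (commA H ut * ut))
    (hmid : ut = (1 / 2 : ℝ) • (u + uh))
    (hcorr : u' = uh - σ • (H * uh * (1 - uhᵀ * uh)))
    (hUle : ((1 : Matrix (Fin N) (Fin N) ℝ) - uᵀ * u).PosSemidef) :
    Matrix.trace (u'ᵀ * H * u') + σ * Matrix.trace ((commA H ut * ut)ᵀ * (commA H ut * ut))
      ≤ Matrix.trace (uᵀ * H * u) := by
  set A := commA H ut with hAdef
  set G := A * ut with hGdef
  set c : ℝ := σ / 2 with hc
  -- basic relations
  have hu : u = ut + c • G := by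
    rw [hmid, hpred, hc]
    ext i j
    simp only [Matrix.add_apply, Matrix.sub_apply, Matrix.smul_apply, smul_eq_mul]
    ring
  have hhat : uh = ut + (-c) • G := by
    rw [hpred, hu, hc]
    ext i j
    simp only [Matrix.add_apply, Matrix.sub_apply, Matrix.smul_apply, smul_eq_mul]
    ring
  have hAT : Aᵀ = -A := commA_transpose hH ut
  have hskew : Gᵀ * ut = -(utᵀ * G) := by
    rw [hGdef, Matrix.transpose_mul, hAT]
    simp only [Matrix.mul_neg, Matrix.neg_mul, Matrix.mul_assoc]
  -- predictor energy identity
  have tkey : 2 * Matrix.trace (Gᵀ * H * ut) = Matrix.trace (Aᵀ * A) := key_traces hH ut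
  have eU := expand_quadratic hH ut G c
  rw [← hu] at eU
  have eHat := expand_quadratic hH ut G (-c)
  rw [← hhat] at eHat
  have ediff : Matrix.trace (uhᵀ * H * uh)
      = Matrix.trace (uᵀ * H * u) - σ * Matrix.trace (Aᵀ * A) := by
    have hσc : σ = 2 * c := by rw [hc]; ring
    rw [eU, eHat, hσc, ← tkey]
    linarith [neg_sq c]
  -- the Cayley step preserves the Gram matrix
  have hgu : uᵀ * u = utᵀ * ut + (c ^ 2) • (Gᵀ * G) := by
    rw [hu]; exact expand_gram ut G c hskew
  have hguh : uhᵀ * uh = utᵀ * ut + (c ^ 2) • (Gᵀ * G) := by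
    rw [hhat, expand_gram ut G (-c) hskew, neg_sq]
  have hgram : uhᵀ * uh = uᵀ * u := by rw [hgu, hguh]
  have hR : ((1 : Matrix (Fin N) (Fin N) ℝ) - uhᵀ * uh).PosSemidef := by
    rw [hgram]; exact hUle
  -- 1 - ut·utᵀ is PSD
  have hc2psd : ((c ^ 2) • (Gᵀ * G)).PosSemidef := by
    have h1 := psd_transpose_mul_self_s14 (c • G)
    have h2 : (c • G)ᵀ * (c • G) = (c ^ 2) • (Gᵀ * G) := by
      rw [Matrix.transpose_smul, Matrix.smul_mul, Matrix.mul_smul, smul_smul, pow_two]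
    rwa [h2] at h1
  have hut1 : ((1 : Matrix (Fin N) (Fin N) ℝ) - utᵀ * ut).PosSemidef := by
    have : (1 : Matrix (Fin N) (Fin N) ℝ) - utᵀ * ut
        = ((1 : Matrix (Fin N) (Fin N) ℝ) - uᵀ * u) + (c ^ 2) • (Gᵀ * G) := by
      rw [hgu]; abel
    rw [this]
    exact hUle.add hc2psd
  have hutP : ((1 : Matrix (Fin n) (Fin n) ℝ) - ut * utᵀ).PosSemidef :=
    one_sub_self_mul_transpose_psd ut hut1
  have hfrob : Matrix.trace (Gᵀ * G) ≤ Matrix.trace (Aᵀ * A) := key_frob H ut hutP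
  -- corrector step
  set R := (1 : Matrix (Fin N) (Fin N) ℝ) - uhᵀ * uh with hRdef
  set M := H * uh * R with hMdef
  have hcorr' : u' = uh + (-σ) • M := by
    rw [hcorr]
    ext i j
    simp only [Matrix.add_apply, Matrix.sub_apply, Matrix.smul_apply, smul_eq_mul, Matrix.neg_apply]
    ring
  have eCorr := expand_quadratic hH uh M (-σ)
  rw [← hcorr'] at eCorr
  have hRT : Rᵀ = R := by
    rw [hRdef, Matrix.transpose_sub, Matrix.transpose_one, Matrix.transpose_mul,
      Matrix.transpose_transpose]
  have hcross : Matrix.trace (Mᵀ * H * uh) = Matrix.trace (R * ((H * uh)ᵀ * (H * uh))) := by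
    congr 1
    rw [hMdef, Matrix.transpose_mul, Matrix.transpose_mul, hRT, hH]
    simp only [Matrix.mul_assoc]
  have hcross_nonneg : 0 ≤ Matrix.trace (Mᵀ * H * uh) := by
    rw [hcross]
    exact psd_trace_mul_nonneg hR (psd_transpose_mul_self_s14 (H * uh))
  have hlast : Matrix.trace (Mᵀ * H * M) ≤ 0 := by
    have h1 := trace_conj_nonneg hHup M
    have h2 : Mᵀ * ((0 : Matrix (Fin n) (Fin n) ℝ) - H) * M = -(Mᵀ * H * M) := by
      rw [zero_sub]
      simp only [Matrix.mul_neg, Matrix.neg_mul]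
    rw [h2, Matrix.trace_neg] at h1
    linarith
  have eCorrLe : Matrix.trace (u'ᵀ * H * u') ≤ Matrix.trace (uhᵀ * H * uh) := by
    rw [eCorr]
    nlinarith [hcross_nonneg, hlast, sq_nonneg σ]
  -- combine
  have := mul_le_mul_of_nonneg_left hfrob hσ.le
  linarith [eCorrLe, ediff]

/-- Energy lower bound. -/
lemma energy_lower {n N : ℕ} {H : Matrix (Fin n) (Fin n) ℝ} {lam1 : ℝ} (hlam1 : lam1 < 0)
    (hHlow : (H - lam1 • (1 : Matrix (Fin n) (Fin n) ℝ)).PosSemidef)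
    (u : Matrix (Fin n) (Fin N) ℝ)
    (hUle : ((1 : Matrix (Fin N) (Fin N) ℝ) - uᵀ * u).PosSemidef) :
    lam1 * N ≤ Matrix.trace (uᵀ * H * u) := by
  have h1 : 0 ≤ Matrix.trace (uᵀ * (H - lam1 • (1 : Matrix (Fin n) (Fin n) ℝ)) * u) :=
    trace_conj_nonneg hHlow u
  have h2 : uᵀ * (H - lam1 • (1 : Matrix (Fin n) (Fin n) ℝ)) * u
      = uᵀ * H * u - lam1 • (uᵀ * u) := by
    simp only [Matrix.mul_sub, Matrix.sub_mul, Matrix.mul_smul, Matrix.smul_mul, Matrix.mul_one]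
  rw [h2, Matrix.trace_sub, Matrix.trace_smul, smul_eq_mul] at h1
  have h3 : Matrix.trace (uᵀ * u) ≤ (N : ℝ) := by
    have := psd_trace_nonneg' hUle
    rw [Matrix.trace_sub, Matrix.trace_one] at this
    simp only [Fintype.card_fin] at this
    linarith
  nlinarith [mul_le_mul_of_nonpos_left h3 hlam1.le]

/-- Vanishing of the rotational gradient along the iteration (part of Theorem 4.1):
the quantity ‖𝒜_{Ũₙ}·Ũₙ‖_F gets below every ε > 0 infinitely often. -/
theorem rotational_gradient_liminf_zero
    {n N : ℕ} (H : Matrix (Fin n) (Fin n) ℝ) (hH : H.IsSymm)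
    (lam1 : ℝ) (hlam1 : lam1 < 0)
    (hHlow : loewnerLE (lam1 • (1 : Matrix (Fin n) (Fin n) ℝ)) H)
    (hHup : loewnerLE H 0)
    (U Uhat Ut : ℕ → Matrix (Fin n) (Fin N) ℝ) (s : ℕ → ℝ)
    (hs : ∀ k, 0 < s k)
    (hpred : ∀ k, Uhat k = U k - s k • (commA H (Ut k) * Ut k))
    (hmid : ∀ k, Ut k = (1 / 2 : ℝ) • (U k + Uhat k))
    (hcorr : ∀ k, U (k + 1) = Uhat k - s k • (H * Uhat k * (1 - (Uhat k)ᵀ * Uhat k)))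
    (hUle : ∀ k, loewnerLE ((U k)ᵀ * U k) 1)
    (δ : ℝ) (hsδ : ∀ k, s k ≤ δ) (hδ : δ * |lam1| < 1)
    (hdiv : Tendsto (fun m => ∑ k ∈ Finset.range m, s k) atTop atTop) :
    ∀ ε > 0, ∀ m : ℕ, ∃ k ≥ m, frobNorm (commA H (Ut k) * Ut k) < ε := by
  intro ε hε m
  by_contra hcon
  push_neg at hcon
  have hHT : Hᵀ = H := hH
  have hHup' : ((0 : Matrix (Fin n) (Fin n) ℝ) - H).PosSemidef := hHup
  have hHlow' : (H - lam1 • (1 : Matrix (Fin n) (Fin n) ℝ)).PosSemidef := hHlow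
  have hUle' : ∀ k, ((1 : Matrix (Fin N) (Fin N) ℝ) - (U k)ᵀ * U k).PosSemidef := hUle
  set φ : ℕ → ℝ := fun k => Matrix.trace ((U k)ᵀ * H * U k) with hφ
  set g : ℕ → ℝ := fun k =>
    Matrix.trace ((commA H (Ut k) * Ut k)ᵀ * (commA H (Ut k) * Ut k)) with hg
  have hstep : ∀ k, φ (k + 1) + s k * g k ≤ φ k := fun k =>
    step_ineq hHT hHup' (U k) (Uhat k) (Ut k) (U (k + 1)) (s k) (hs k)
      (hpred k) (hmid k) (hcorr k) (hUle' k)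
  have hlow : ∀ k, lam1 * N ≤ φ k := fun k => energy_lower hlam1 hHlow' (U k) (hUle' k)
  have hsum : ∀ M, m ≤ M → φ M + ∑ k ∈ Finset.Ico m M, s k * g k ≤ φ m := by
    intro M hM
    induction M, hM using Nat.le_induction with
    | base => simp
    | succ M hM ih =>
        rw [Finset.sum_Ico_succ_top hM]
        have := hstep M
        linarith
  -- g k ≥ ε² for k ≥ m
  have hgeps : ∀ k, m ≤ k → ε ^ 2 ≤ g k := by
    intro k hk
    have h1 := hcon k hk
    have hgk : g k = ∑ i, ∑ j, ((commA H (Ut k) * Ut k) i j) ^ 2 := by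
      rw [hg]
      simp only [Matrix.trace, Matrix.diag, Matrix.mul_apply, Matrix.transpose_apply, pow_two]
      exact Finset.sum_comm
    have hsq : 0 ≤ ∑ i, ∑ j, ((commA H (Ut k) * Ut k) i j) ^ 2 :=
      Finset.sum_nonneg fun i _ => Finset.sum_nonneg fun j _ => sq_nonneg _
    rw [frobNorm] at h1
    rw [hgk]
    exact (Real.le_sqrt hε.le hsq).mp h1
  -- bound on partial sums
  set C : ℝ := φ m - lam1 * N with hC
  have hbound : ∀ M, m ≤ M → ε ^ 2 * ∑ k ∈ Finset.Ico m M, s k ≤ C := by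
    intro M hM
    have h1 : ∑ k ∈ Finset.Ico m M, ε ^ 2 * s k ≤ ∑ k ∈ Finset.Ico m M, s k * g k := by
      refine Finset.sum_le_sum fun k hk => ?_
      have hk' : m ≤ k := (Finset.mem_Ico.mp hk).1
      have := mul_le_mul_of_nonneg_left (hgeps k hk') (hs k).le
      linarith [this]
    rw [← Finset.mul_sum] at h1
    have h2 := hsum M hM
    have h3 := hlow M
    linarith
  -- contradiction with divergence
  have hε2 : (0 : ℝ) < ε ^ 2 := by positivity
  obtain ⟨M, hM⟩ := ((eventually_ge_atTop m).and
    (hdiv.eventually_ge_atTop (∑ k ∈ Finset.range m, s k + (C / ε ^ 2 + 1)))).exists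
  obtain ⟨hMm, hMsum⟩ := hM
  have hico : ∑ k ∈ Finset.Ico m M, s k
      = ∑ k ∈ Finset.range M, s k - ∑ k ∈ Finset.range m, s k := by
    rw [Finset.sum_Ico_eq_sub _ hMm]
  have h4 := hbound M hMm
  rw [hico] at h4
  have h5 : C / ε ^ 2 + 1 ≤ ∑ k ∈ Finset.range M, s k - ∑ k ∈ Finset.range m, s k := by
    linarith
  have h6 : ε ^ 2 * (C / ε ^ 2 + 1) = C + ε ^ 2 := by
    field_simp
  nlinarith [mul_le_mul_of_nonneg_left h5 hε2.le]

end
end
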